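/- Let γ > 0 and m ∈ ℕ, and define ψ_m : ℝ² → ℂ by ψ_m(x₁,x₂) = (γ^((m+1)/2)/√(π·m!))·(x₁ + i x₂)^m·exp(−γ(x₁²+x₂²)/2). Then ∫_{ℝ²} (|∂₁ψ_m(x)|² + |∂₂ψ_m(x)|²) dx = (m+1)·γ. -/

import Mathlib

open MeasureTheory Complex Set

noncomputable abbrev E2 := EuclideanSpace ℝ (Fin 2)

noncomputable def Zc : E2 →L[ℝ] ℂ :=
  Complex.ofRealCLM.comp (EuclideanSpace.proj 0) +
    Complex.I • Complex.ofRealCLM.comp (EuclideanSpace.proj 1)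

lemma Zc_apply (x : E2) : Zc x = (x 0 : ℂ) + Complex.I * (x 1 : ℂ) := by
  simp [Zc]

lemma hasFDerivAt_q (x : E2) :
    HasFDerivAt (fun x : E2 => (x 0) ^ 2 + (x 1) ^ 2)
      ((2 * x 0) • (EuclideanSpace.proj 0 : E2 →L[ℝ] ℝ) +
        (2 * x 1) • (EuclideanSpace.proj 1 : E2 →L[ℝ] ℝ)) x := by
  have h0 : HasFDerivAt (fun x : E2 => x 0) (EuclideanSpace.proj 0 : E2 →L[ℝ] ℝ) x :=
    (EuclideanSpace.proj (0 : Fin 2) : E2 →L[ℝ] ℝ).hasFDerivAt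
  have h1 : HasFDerivAt (fun x : E2 => x 1) (EuclideanSpace.proj 1 : E2 →L[ℝ] ℝ) x :=
    (EuclideanSpace.proj (1 : Fin 2) : E2 →L[ℝ] ℝ).hasFDerivAt
  have h0' := ((hasDerivAt_pow 2 (x 0)).comp_hasFDerivAt x h0)
  have h1' := ((hasDerivAt_pow 2 (x 1)).comp_hasFDerivAt x h1)
  have h := h0'.add h1'
  simp only [pow_one, Nat.cast_ofNat, Nat.add_one_sub_one] at h
  exact h

lemma hasFDerivAt_psi (γ Cr : ℝ) (m : ℕ) (ψ : E2 → ℂ)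
    (hψ : ∀ x : E2, ψ x = (Cr : ℂ) * (Zc x) ^ m *
      Complex.exp (((-(γ * ((x 0) ^ 2 + (x 1) ^ 2)) / 2 : ℝ) : ℂ))) (x : E2) :
    HasFDerivAt ψ
      ((Cr : ℂ) • ((Zc x ^ m) •
          (Complex.exp (((-(γ * ((x 0) ^ 2 + (x 1) ^ 2)) / 2 : ℝ) : ℂ)) •
            (Complex.ofRealCLM.comp
              (((-(γ * (2 * x 0)) / 2) • (EuclideanSpace.proj 0 : E2 →L[ℝ] ℝ) +
                (-(γ * (2 * x 1)) / 2) • (EuclideanSpace.proj 1 : E2 →L[ℝ] ℝ))))) +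
        Complex.exp (((-(γ * ((x 0) ^ 2 + (x 1) ^ 2)) / 2 : ℝ) : ℂ)) •
          (((m : ℂ) * Zc x ^ (m - 1)) • Zc))) x := by
  have hfun : ψ = fun x : E2 => (Cr : ℂ) * ((Zc x) ^ m *
      Complex.exp (((-(γ * ((x 0) ^ 2 + (x 1) ^ 2)) / 2 : ℝ) : ℂ))) := by
    funext y; rw [hψ y, mul_assoc]
  rw [hfun]
  have hpow : HasFDerivAt (fun x : E2 => (Zc x) ^ m) (((m : ℂ) * Zc x ^ (m - 1)) • Zc) x :=
    (hasDerivAt_pow m (Zc x)).comp_hasFDerivAt x Zc.hasFDerivAt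
  have hw : HasFDerivAt (fun x : E2 => (-(γ * ((x 0) ^ 2 + (x 1) ^ 2)) / 2 : ℝ))
      ((-(γ * (2 * x 0)) / 2) • (EuclideanSpace.proj 0 : E2 →L[ℝ] ℝ) +
        (-(γ * (2 * x 1)) / 2) • (EuclideanSpace.proj 1 : E2 →L[ℝ] ℝ)) x := by
    have h := (hasFDerivAt_q x).const_mul (-γ/2)
    have hfun2 : (fun x : E2 => (-(γ * ((x 0) ^ 2 + (x 1) ^ 2)) / 2 : ℝ)) =
        fun x : E2 => (-γ/2) * ((x 0) ^ 2 + (x 1) ^ 2) := by funext y; ring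
    rw [hfun2]
    exact h.congr_fderiv (by ext v; simp; ring)
  have hwc : HasFDerivAt (fun x : E2 => (((-(γ * ((x 0) ^ 2 + (x 1) ^ 2)) / 2 : ℝ)) : ℂ))
      (Complex.ofRealCLM.comp
        (((-(γ * (2 * x 0)) / 2) • (EuclideanSpace.proj 0 : E2 →L[ℝ] ℝ) +
          (-(γ * (2 * x 1)) / 2) • (EuclideanSpace.proj 1 : E2 →L[ℝ] ℝ)))) x :=
    Complex.ofRealCLM.hasFDerivAt.comp x hw
  exact (hpow.mul hwc.cexp).const_mul _

lemma fderiv_psi_single (γ Cr : ℝ) (m : ℕ) (ψ : E2 → ℂ)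
    (hψ : ∀ x : E2, ψ x = (Cr : ℂ) * (Zc x) ^ m *
      Complex.exp (((-(γ * ((x 0) ^ 2 + (x 1) ^ 2)) / 2 : ℝ) : ℂ))) (x : E2) :
    fderiv ℝ ψ x (EuclideanSpace.single 0 1) =
      (Cr : ℂ) * ((m : ℂ) * Zc x ^ (m - 1) - (γ : ℝ) * (x 0) * Zc x ^ m) *
        Complex.exp (((-(γ * ((x 0) ^ 2 + (x 1) ^ 2)) / 2 : ℝ) : ℂ)) ∧
    fderiv ℝ ψ x (EuclideanSpace.single 1 1) =
      (Cr : ℂ) * (Complex.I * (m : ℂ) * Zc x ^ (m - 1) - (γ : ℝ) * (x 1) * Zc x ^ m) *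
        Complex.exp (((-(γ * ((x 0) ^ 2 + (x 1) ^ 2)) / 2 : ℝ) : ℂ)) := by
  rw [(hasFDerivAt_psi γ Cr m ψ hψ x).fderiv]
  constructor <;>
  · simp [ContinuousLinearMap.add_apply, ContinuousLinearMap.smul_apply,
      ContinuousLinearMap.coe_comp', Function.comp, PiLp.proj_apply,
      EuclideanSpace.single_apply, Zc, smul_eq_mul]
    ring

lemma normsq_key (γ a b : ℝ) (m : ℕ) :
    Complex.normSq ((m : ℂ) * ((a : ℂ) + I * b) ^ (m - 1) - (γ : ℂ) * a * ((a : ℂ) + I * b) ^ m) +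
      Complex.normSq (I * (m : ℂ) * ((a : ℂ) + I * b) ^ (m - 1) - (γ : ℂ) * b * ((a : ℂ) + I * b) ^ m) =
    2 * m ^ 2 * (a ^ 2 + b ^ 2) ^ (m - 1) - 2 * γ * m * (a ^ 2 + b ^ 2) ^ m +
      γ ^ 2 * (a ^ 2 + b ^ 2) ^ (m + 1) := by
  have hz : Complex.normSq ((a : ℂ) + I * b) = a ^ 2 + b ^ 2 := by
    simp [Complex.normSq_apply]; ring
  cases m with
  | zero =>
      simp [Complex.normSq_apply]
      ring
  | succ n =>
      have h1 : ((n + 1 : ℕ) : ℂ) * ((a : ℂ) + I * b) ^ (n + 1 - 1) -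
          (γ : ℂ) * a * ((a : ℂ) + I * b) ^ (n + 1) =
          (((n + 1 : ℕ) : ℂ) - (γ : ℂ) * a * ((a : ℂ) + I * b)) * ((a : ℂ) + I * b) ^ n := by
        simp [pow_succ]; ring
      have h2 : I * ((n + 1 : ℕ) : ℂ) * ((a : ℂ) + I * b) ^ (n + 1 - 1) -
          (γ : ℂ) * b * ((a : ℂ) + I * b) ^ (n + 1) =
          ((I * ((n + 1 : ℕ) : ℂ)) - (γ : ℂ) * b * ((a : ℂ) + I * b)) * ((a : ℂ) + I * b) ^ n := by
        simp [pow_succ]; ring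
      rw [h1, h2, map_mul, map_mul, map_pow, hz]
      have e1 : Complex.normSq (((n + 1 : ℕ) : ℂ) - (γ : ℂ) * a * ((a : ℂ) + I * b)) =
          ((n + 1 : ℝ) - γ * a ^ 2) ^ 2 + (γ * a * b) ^ 2 := by
        simp [Complex.normSq_apply]
        ring
      have e2 : Complex.normSq ((I * ((n + 1 : ℕ) : ℂ)) - (γ : ℂ) * b * ((a : ℂ) + I * b)) =
          (γ * b * a) ^ 2 + ((n + 1 : ℝ) - γ * b ^ 2) ^ 2 := by
        simp [Complex.normSq_apply]
        ring
      rw [e1, e2]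
      push_cast
      ring

lemma norm_piece (Cr r : ℝ) (A : ℂ) :
    ‖(Cr : ℂ) * A * Complex.exp ((r : ℂ))‖ ^ 2 = Cr ^ 2 * Complex.normSq A * Real.exp (2 * r) := by
  have hexp : Real.exp r ^ 2 = Real.exp (2 * r) := by
    rw [← Real.exp_nat_mul]; norm_num
  simp only [norm_mul, mul_pow, Complex.sq_norm, Complex.norm_exp,
    Complex.ofReal_re, Complex.norm_real, Real.norm_eq_abs, _root_.sq_abs, hexp]

lemma pointwise_norm (γ Cr a b : ℝ) (m : ℕ) :
    ‖(Cr : ℂ) * ((m : ℂ) * ((a : ℂ) + I * b) ^ (m - 1) - (γ : ℝ) * a * ((a : ℂ) + I * b) ^ m) *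
        Complex.exp (((-(γ * (a ^ 2 + b ^ 2)) / 2 : ℝ) : ℂ))‖ ^ 2 +
      ‖(Cr : ℂ) * (I * (m : ℂ) * ((a : ℂ) + I * b) ^ (m - 1) - (γ : ℝ) * b * ((a : ℂ) + I * b) ^ m) *
        Complex.exp (((-(γ * (a ^ 2 + b ^ 2)) / 2 : ℝ) : ℂ))‖ ^ 2 =
    Cr ^ 2 * Real.exp (-(γ * (a ^ 2 + b ^ 2))) *
      (2 * m ^ 2 * (a ^ 2 + b ^ 2) ^ (m - 1) - 2 * γ * m * (a ^ 2 + b ^ 2) ^ m +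
        γ ^ 2 * (a ^ 2 + b ^ 2) ^ (m + 1)) := by
  rw [norm_piece, norm_piece]
  have h2r : 2 * (-(γ * (a ^ 2 + b ^ 2)) / 2) = -(γ * (a ^ 2 + b ^ 2)) := by ring
  rw [h2r]
  have hk := normsq_key γ a b m
  linear_combination (Cr ^ 2 * Real.exp (-(γ * (a ^ 2 + b ^ 2)))) * hk

lemma Tk_int {γ : ℝ} (hγ : 0 < γ) (k : ℕ) :
    IntegrableOn (fun r : ℝ => r * ((r ^ 2) ^ k * Real.exp (-(γ * r ^ 2)))) (Ioi 0) := by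
  have h := integrableOn_rpow_mul_exp_neg_mul_sq hγ (s := ((2 * k + 1 : ℕ) : ℝ))
    (by have : (0:ℝ) ≤ ((2 * k + 1 : ℕ) : ℝ) := Nat.cast_nonneg _; linarith)
  apply h.congr_fun ?_ measurableSet_Ioi
  intro r hr
  dsimp only
  rw [Real.rpow_natCast, pow_succ, pow_mul, neg_mul γ (r ^ 2)]
  ring

lemma Tk_val {γ : ℝ} (hγ : 0 < γ) (k : ℕ) :
    ∫ r in Ioi (0:ℝ), r * ((r ^ 2) ^ k * Real.exp (-(γ * r ^ 2))) =
      (k.factorial : ℝ) / (2 * γ ^ (k + 1)) := by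
  have hsub := integral_comp_rpow_Ioi_of_pos
    (g := fun u : ℝ => u ^ k * Real.exp (-(γ * u))) (p := 2) (by norm_num)
  have hval : ∫ u in Ioi (0:ℝ), u ^ k * Real.exp (-(γ * u)) =
      (k.factorial : ℝ) / γ ^ (k + 1) := by
    have h := Real.integral_rpow_mul_exp_neg_mul_Ioi (a := (k + 1 : ℝ)) (by positivity) hγ
    rw [show ∫ t in Ioi (0:ℝ), t ^ ((k:ℝ) + 1 - 1) * Real.exp (-(γ * t)) =
        ∫ u in Ioi (0:ℝ), u ^ k * Real.exp (-(γ * u)) from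
      setIntegral_congr_fun measurableSet_Ioi (fun t ht => by
        rw [show ((k:ℝ) + 1 - 1) = ((k : ℕ) : ℝ) by ring, Real.rpow_natCast])] at h
    rw [h, show ((k:ℝ) + 1) = ((k + 1 : ℕ) : ℝ) by push_cast; ring, Real.rpow_natCast]
    push_cast
    rw [Real.Gamma_nat_eq_factorial]
    rw [div_pow, one_pow]
    ring
  calc ∫ r in Ioi (0:ℝ), r * ((r ^ 2) ^ k * Real.exp (-(γ * r ^ 2)))
      = ∫ x in Ioi (0:ℝ), (1/2 : ℝ) • ((2 * x ^ ((2:ℝ) - 1)) •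
          ((fun u : ℝ => u ^ k * Real.exp (-(γ * u))) (x ^ (2:ℝ)))) := by
        apply setIntegral_congr_fun measurableSet_Ioi
        intro x hx
        have h2 : (x : ℝ) ^ (2:ℝ) = x ^ 2 := by
          rw [show (2:ℝ) = ((2:ℕ):ℝ) by norm_num, Real.rpow_natCast]
        simp only [smul_eq_mul, h2, show ((2:ℝ) - 1) = 1 by norm_num, Real.rpow_one]
        ring
    _ = (k.factorial : ℝ) / (2 * γ ^ (k + 1)) := by
        rw [integral_smul, hsub, smul_eq_mul, hval]
        ring

lemma euc_to_prod (g : ℝ × ℝ → ℝ) :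
    ∫ x : E2, g (x 0, x 1) = ∫ p : ℝ × ℝ, g p := by
  have h1 := (EuclideanSpace.volume_preserving_symm_measurableEquiv_toLp (Fin 2))
  have h2 := volume_preserving_finTwoArrow ℝ
  have h := (h2.comp h1).integral_comp
    ((((MeasurableEquiv.toLp 2 (Fin 2 → ℝ)).symm).trans MeasurableEquiv.finTwoArrow).measurableEmbedding) g
  rw [← h]
  rfl

lemma polar_reduce (K : ℝ → ℝ) :
    ∫ p : ℝ × ℝ, K (p.1 ^ 2 + p.2 ^ 2) =
      (2 * Real.pi) * ∫ r in Ioi (0:ℝ), r * K (r ^ 2) := by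
  rw [← integral_comp_polarCoord_symm (fun p => K (p.1 ^ 2 + p.2 ^ 2))]
  have hpt : ∀ p : ℝ × ℝ, p.1 • K ((polarCoord.symm p).1 ^ 2 + (polarCoord.symm p).2 ^ 2) =
      (fun r => r * K (r ^ 2)) p.1 * (fun _ : ℝ => (1:ℝ)) p.2 := by
    intro p
    have h := Real.sin_sq_add_cos_sq p.2
    have hsymm : polarCoord.symm p = (p.1 * Real.cos p.2, p.1 * Real.sin p.2) := rfl
    rw [hsymm]
    dsimp
    rw [show (p.1 * Real.cos p.2) ^ 2 + (p.1 * Real.sin p.2) ^ 2 = p.1 ^ 2 by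
      linear_combination p.1 ^ 2 * h]
    ring
  rw [show (fun p : ℝ × ℝ => p.1 • K ((polarCoord.symm p).1 ^ 2 + (polarCoord.symm p).2 ^ 2)) =
      fun p : ℝ × ℝ => (fun r => r * K (r ^ 2)) p.1 * (fun _ : ℝ => (1:ℝ)) p.2 from funext hpt]
  have htarget : polarCoord.target = Ioi (0:ℝ) ×ˢ Ioo (-Real.pi) Real.pi := rfl
  have hprod := setIntegral_prod_mul (μ := (volume : Measure ℝ)) (ν := (volume : Measure ℝ))
    (fun r => r * K (r ^ 2)) (fun _ : ℝ => (1:ℝ)) (Ioi 0) (Ioo (-Real.pi) Real.pi)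
  rw [htarget, Measure.volume_eq_prod ℝ ℝ, hprod]
  simp [Real.volume_Ioo]
  rw [max_eq_left (by positivity)]
  ring

/-- the kinetic energy of the 2D vortex function `ψ_m` equals `(m+1)·γ`. -/
theorem vortex_kinetic_energy
    (γ : ℝ) (hγ : 0 < γ) (m : ℕ)
    (ψ : EuclideanSpace ℝ (Fin 2) → ℂ)
    (hψ : ∀ x : EuclideanSpace ℝ (Fin 2),
      ψ x = ((γ ^ (((m : ℝ) + 1) / 2) / Real.sqrt (Real.pi * m.factorial) : ℝ) : ℂ) *
        ((x 0 : ℂ) + Complex.I * (x 1 : ℂ)) ^ m *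
        Complex.exp (((-(γ * ((x 0) ^ 2 + (x 1) ^ 2)) / 2 : ℝ) : ℂ))) :
    (∫ x : EuclideanSpace ℝ (Fin 2),
        (‖fderiv ℝ ψ x (EuclideanSpace.single 0 1)‖ ^ 2 +
         ‖fderiv ℝ ψ x (EuclideanSpace.single 1 1)‖ ^ 2)) = ((m : ℝ) + 1) * γ := by
  set Cr : ℝ := γ ^ (((m : ℝ) + 1) / 2) / Real.sqrt (Real.pi * m.factorial) with hCr
  set K : ℝ → ℝ := fun s => Cr ^ 2 * Real.exp (-(γ * s)) *
      (2 * m ^ 2 * s ^ (m - 1) - 2 * γ * m * s ^ m + γ ^ 2 * s ^ (m + 1)) with hK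
  have hψ' : ∀ x : E2, ψ x = (Cr : ℂ) * (Zc x) ^ m *
      Complex.exp (((-(γ * ((x 0) ^ 2 + (x 1) ^ 2)) / 2 : ℝ) : ℂ)) := by
    intro x
    rw [hψ x, Zc_apply]
  have hpt : ∀ x : E2,
      ‖fderiv ℝ ψ x (EuclideanSpace.single 0 1)‖ ^ 2 +
        ‖fderiv ℝ ψ x (EuclideanSpace.single 1 1)‖ ^ 2 = K ((x 0) ^ 2 + (x 1) ^ 2) := by
    intro x
    obtain ⟨h1, h2⟩ := fderiv_psi_single γ Cr m ψ hψ' x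
    rw [h1, h2, Zc_apply]
    exact pointwise_norm γ Cr (x 0) (x 1) m
  rw [show (fun x : E2 => ‖fderiv ℝ ψ x (EuclideanSpace.single 0 1)‖ ^ 2 +
      ‖fderiv ℝ ψ x (EuclideanSpace.single 1 1)‖ ^ 2) =
      fun x : E2 => (fun p : ℝ × ℝ => K (p.1 ^ 2 + p.2 ^ 2)) (x 0, x 1) from funext hpt]
  rw [euc_to_prod (fun p : ℝ × ℝ => K (p.1 ^ 2 + p.2 ^ 2)), polar_reduce K]
  -- split the radial integral into three monomial pieces
  have hsplit : (fun r : ℝ => r * K (r ^ 2)) =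
      fun r : ℝ => ((Cr ^ 2 * (2 * m ^ 2)) * (r * ((r ^ 2) ^ (m - 1) * Real.exp (-(γ * r ^ 2)))) -
        (Cr ^ 2 * (2 * γ * m)) * (r * ((r ^ 2) ^ m * Real.exp (-(γ * r ^ 2))))) +
        (Cr ^ 2 * γ ^ 2) * (r * ((r ^ 2) ^ (m + 1) * Real.exp (-(γ * r ^ 2)))) := by
    funext r
    simp only [hK]
    ring
  rw [hsplit]
  have i1 := (Tk_int hγ (m - 1)).const_mul (Cr ^ 2 * (2 * m ^ 2))
  have i2 := (Tk_int hγ m).const_mul (Cr ^ 2 * (2 * γ * m))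
  have i3 := (Tk_int hγ (m + 1)).const_mul (Cr ^ 2 * γ ^ 2)
  have i12 : Integrable (fun r : ℝ =>
      (Cr ^ 2 * (2 * m ^ 2)) * (r * ((r ^ 2) ^ (m - 1) * Real.exp (-(γ * r ^ 2)))) -
        (Cr ^ 2 * (2 * γ * m)) * (r * ((r ^ 2) ^ m * Real.exp (-(γ * r ^ 2)))))
      (volume.restrict (Ioi 0)) := i1.sub i2
  rw [integral_add i12 i3, integral_sub i1 i2,
    integral_const_mul, integral_const_mul, integral_const_mul,
    Tk_val hγ (m - 1), Tk_val hγ m, Tk_val hγ (m + 1)]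
  -- final arithmetic
  have hCr2 : Cr ^ 2 = γ ^ (m + 1) / (Real.pi * m.factorial) := by
    rw [hCr, div_pow, Real.sq_sqrt (by positivity)]
    congr 1
    rw [← Real.rpow_natCast (γ ^ (((m : ℝ) + 1) / 2)) 2, ← Real.rpow_mul hγ.le,
      ← Real.rpow_natCast γ (m + 1)]
    congr 1
    push_cast
    ring
  have hfact : (m : ℝ) ^ 2 * ((m - 1).factorial : ℝ) = m * (m.factorial : ℝ) := by
    cases m with
    | zero => simp
    | succ n =>
        simp only [Nat.add_sub_cancel, Nat.factorial_succ]
        push_cast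
        ring
  have hfs : ((m + 1).factorial : ℝ) = (m + 1) * (m.factorial : ℝ) := by
    rw [Nat.factorial_succ]; push_cast; ring
  have hγm : γ ^ m ≠ 0 := by positivity
  have hπ : Real.pi ≠ 0 := Real.pi_ne_zero
  have hmf : (m.factorial : ℝ) ≠ 0 := by positivity
  have hterm1 : (Cr ^ 2 * (2 * (m:ℝ) ^ 2)) * (((m - 1).factorial : ℝ) / (2 * γ ^ (m - 1 + 1))) =
      Cr ^ 2 * ((m : ℝ) * (m.factorial : ℝ)) / γ ^ m := by
    cases m with
    | zero => simp
    | succ n =>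
        simp only [Nat.add_sub_cancel, Nat.factorial_succ]
        push_cast
        field_simp
  rw [hterm1, hCr2, hfs]
  field_simp
  ring
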